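/- Suppose (X,σ) is a minimal subshift over a finite alphabet, G is a torsion-free subgroup of Aut(X), R ∈ ℕ, and w ∈ L_n(X) extends uniquely 2R times to both the right and the left; let w̃ ∈ L_{n+4R}(X) be the word obtained by extending w exactly 2R times in each direction. Then the map φ ↦ φ(w̃) is injective on Aut_R(X) ∩ G; consequently |Aut_R(X) ∩ G| ≤ P_X(n+2R). -/

import Mathlib

open Filter Topology

/-- The left shift `σ` on bi-infinite sequences over the alphabet `A`. -/
def shiftMap (A : Type*) : (ℤ → A) → (ℤ → A) := fun x i => x (i + 1)

/-- A subshift: a nonempty, closed, shift-invariant subset of `A^ℤ`. -/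
def IsSubshift {A : Type*} [TopologicalSpace A] (X : Set (ℤ → A)) : Prop :=
  X.Nonempty ∧ IsClosed X ∧ shiftMap A '' X = X

/-- A minimal subshift: a subshift with no nonempty proper closed shift-invariant subset. -/
def IsMinimalSubshift {A : Type*} [TopologicalSpace A] (X : Set (ℤ → A)) : Prop :=
  IsSubshift X ∧
    ∀ Y : Set (ℤ → A), Y ⊆ X → Y.Nonempty → IsClosed Y → shiftMap A '' Y = Y → Y = X

/-- The words of length `n` in the language of `X`. -/
def Lang {A : Type*} (X : Set (ℤ → A)) (n : ℕ) : Set (Fin n → A) :=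
  {w | ∃ x ∈ X, ∀ i : Fin n, x (i.val : ℤ) = w i}

/-- The complexity function `P_X(n)`, the number of words of length `n` in `X`. -/
noncomputable def complexity {A : Type*} (X : Set (ℤ → A)) (n : ℕ) : ℕ :=
  (Lang X n).ncard

/-- The one-sided cylinder set `[w]_0^+` of the word `w` in `X`. -/
def cylinder {A : Type*} (X : Set (ℤ → A)) {n : ℕ} (w : Fin n → A) : Set ↥X :=
  {x | ∀ i : Fin n, (x : ℤ → A) (i.val : ℤ) = w i}

/-- `φ` commutes with the shift on `X`. -/
def CommutesWithShift {A : Type*} (X : Set (ℤ → A)) (φ : ↥X → ↥X) : Prop :=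
  ∀ x y : ↥X, shiftMap A (x : ℤ → A) = (y : ℤ → A) →
    shiftMap A ((φ x : ℤ → A)) = ((φ y : ℤ → A))

/-- The automorphism group of the subshift `(X, σ)`: homeomorphisms of `X`
commuting with the shift, as a subgroup of the permutation group of `X`. -/
def Aut {A : Type*} [TopologicalSpace A] (X : Set (ℤ → A)) : Subgroup (Equiv.Perm ↥X) where
  carrier := {φ | Continuous ⇑φ ∧ Continuous ⇑φ.symm ∧
    CommutesWithShift X ⇑φ ∧ CommutesWithShift X ⇑φ.symm}
  one_mem' := by
    refine ⟨?_, ?_, ?_, ?_⟩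
    · simpa using continuous_id
    · exact continuous_id
    · intro x y h; simpa using h
    · intro x y h; exact h
  mul_mem' := by
    rintro φ ψ ⟨hφ1, hφ2, hφ3, hφ4⟩ ⟨hψ1, hψ2, hψ3, hψ4⟩
    refine ⟨?_, ?_, ?_, ?_⟩
    · have h : ⇑(φ * ψ) = ⇑φ ∘ ⇑ψ := rfl
      rw [h]; exact hφ1.comp hψ1
    · have h : ⇑(φ * ψ).symm = ⇑ψ.symm ∘ ⇑φ.symm := rfl
      rw [h]; exact hψ2.comp hφ2
    · intro x y h
      exact hφ3 (ψ x) (ψ y) (hψ3 x y h)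
    · intro x y h
      exact hψ4 (φ.symm x) (φ.symm y) (hφ4 x y h)
  inv_mem' := by
    rintro φ ⟨h1, h2, h3, h4⟩
    exact ⟨h2, h1, h4, h3⟩

/-- `φ` is determined at the coordinate `0` by the window `[-R, R]`, i.e. `φ` is a
block code of range `R`. -/
def IsBlockCode {A : Type*} (X : Set (ℤ → A)) (φ : ↥X → ↥X) (R : ℕ) : Prop :=
  ∀ x y : ↥X, (∀ i : ℤ, -(R : ℤ) ≤ i → i ≤ (R : ℤ) → (x : ℤ → A) i = (y : ℤ → A) i) →
    (φ x : ℤ → A) 0 = (φ y : ℤ → A) 0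

/-- `Aut_R(X)`: automorphisms `φ` such that both `φ` and `φ⁻¹` are block codes of range `R`. -/
def AutR {A : Type*} [TopologicalSpace A] (X : Set (ℤ → A)) (R : ℕ) : Set (Equiv.Perm ↥X) :=
  {φ | φ ∈ Aut X ∧ IsBlockCode X ⇑φ R ∧ IsBlockCode X ⇑φ.symm R}

/-- `w` extends uniquely `k` times to the right: there is exactly one word of length
`n + k` in the language whose first `n` letters are `w`. -/
def ExtendsUniquelyRight {A : Type*} (X : Set (ℤ → A)) {n : ℕ} (w : Fin n → A) (k : ℕ) : Prop :=
  ∃! u : Fin (n + k) → A, u ∈ Lang X (n + k) ∧ ∀ i : Fin n, u (Fin.castAdd k i) = w i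

/-- `w` extends uniquely `k` times to the left: there is exactly one word of length
`n + k` in the language whose last `n` letters are `w`. -/
def ExtendsUniquelyLeft {A : Type*} (X : Set (ℤ → A)) {n : ℕ} (w : Fin n → A) (k : ℕ) : Prop :=
  ∃! u : Fin (n + k) → A, u ∈ Lang X (n + k) ∧
    ∀ i : Fin n, u (Fin.cast (Nat.add_comm k n) (Fin.natAdd k i)) = w i

/-- The Følner ratio `|F △ gF| / |F|`. -/
noncomputable def folnerRatio {G : Type*} [Group G] (F : Finset G) (g : G) : ℝ :=
  letI := Classical.decEq G
  ((symmDiff F (F.image (fun h => g * h))).card : ℝ) / (F.card : ℝ)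

/-- A countable discrete group is amenable if it admits a Følner sequence. -/
def IsAmenableGrp (G : Type*) [Group G] : Prop :=
  ∃ F : ℕ → Finset G,
    (∀ g : G, ∀ᶠ k in atTop, g ∈ F k) ∧
    (∀ g : G, Tendsto (fun k => folnerRatio (F k) g) atTop (𝓝 0))

/-- `S` is a finite symmetric generating set of `G`. -/
def IsSymmGen {G : Type*} [Group G] (S : Finset G) : Prop :=
  (∀ s ∈ S, s⁻¹ ∈ S) ∧ Subgroup.closure (S : Set G) = ⊤

/-- The growth function `γ_G^S(n)`: the number of elements of `G` expressible as a
product of at most `n` elements of `S`. -/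
noncomputable def growthFn {G : Type*} [Group G] (S : Finset G) (n : ℕ) : ℕ :=
  Nat.card {g : G // ∃ l : List G, l.length ≤ n ∧ (∀ x ∈ l, x ∈ S) ∧ l.prod = g}

/-- `G` has subexponential growth. -/
def HasSubexpGrowth (G : Type*) [Group G] : Prop :=
  ∀ S : Finset G, IsSymmGen S →
    Tendsto (fun n : ℕ => Real.log (growthFn S n) / (n : ℝ)) atTop (𝓝 0)

/-- A monoid is torsion-free if no element other than `1` has finite order
(the definition `Monoid.IsTorsionFree` of the older Mathlib, since removed). -/
def Monoid.IsTorsionFree (G : Type*) [Monoid G] : Prop :=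
  ∀ g : G, g ≠ 1 → ¬IsOfFinOrder g

section AuxShift

variable {A : Type*} {X : Set (ℤ → A)}

lemma shiftMap_injective : Function.Injective (shiftMap A) := by
  intro a b h
  funext j
  have := congrFun h (j - 1)
  simpa [shiftMap] using this

lemma shift_mem (hX : shiftMap A '' X = X) (m : ℤ) {x : ℤ → A} (hx : x ∈ X) :
    (fun i => x (i + m)) ∈ X := by
  induction m using Int.induction_on with
  | zero => simpa using hx
  | succ k ih =>
      have : (fun i : ℤ => x (i + (k + 1))) = shiftMap A (fun i => x (i + k)) := by
        funext i; simp [shiftMap]; ring_nf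
      rw [this, ← hX]
      exact Set.mem_image_of_mem _ ih
  | pred k ih =>
      have hmem : (fun i : ℤ => x (i + -(k:ℤ))) ∈ X := ih
      rw [← hX] at hmem
      obtain ⟨z, hz, hze⟩ := hmem
      have : shiftMap A (fun i : ℤ => x (i + (-(k:ℤ) - 1))) = shiftMap A z := by
        rw [hze]; funext i; show x (i + 1 + (-(k:ℤ) - 1)) = x (i + -(k:ℤ)); ring_nf
      have := shiftMap_injective this
      rw [this]; exact hz

/-- shift of a point of `X`, as a point of `X`. -/
def shiftPt (hX : shiftMap A '' X = X) (m : ℤ) (x : ↥X) : ↥X :=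
  ⟨fun i => (x : ℤ → A) (i + m), shift_mem hX m x.2⟩

@[simp] lemma shiftPt_apply (hX : shiftMap A '' X = X) (m : ℤ) (x : ↥X) (i : ℤ) :
    (shiftPt hX m x : ℤ → A) i = (x : ℤ → A) (i + m) := rfl

lemma shiftPt_shiftPt (hX : shiftMap A '' X = X) (m m' : ℤ) (x : ↥X) :
    shiftPt hX m (shiftPt hX m' x) = shiftPt hX (m + m') x := by
  apply Subtype.ext; funext i; simp [shiftPt, add_assoc]

lemma shiftPt_zero (hX : shiftMap A '' X = X) (x : ↥X) : shiftPt hX 0 x = x := by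
  apply Subtype.ext; funext i; simp [shiftPt]

lemma commutes_shiftPt_one (hX : shiftMap A '' X = X) {φ : ↥X → ↥X}
    (hφ : CommutesWithShift X φ) (x : ↥X) :
    φ (shiftPt hX 1 x) = shiftPt hX 1 (φ x) := by
  have h := hφ x (shiftPt hX 1 x) rfl
  exact Subtype.ext h.symm

lemma commutes_shiftPt (hX : shiftMap A '' X = X) {φ : ↥X → ↥X}
    (hφ : CommutesWithShift X φ) (m : ℤ) (x : ↥X) :
    φ (shiftPt hX m x) = shiftPt hX m (φ x) := by
  induction m using Int.induction_on with
  | zero => rw [shiftPt_zero, shiftPt_zero]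
  | succ k ih =>
      have h1 : shiftPt hX ((k:ℤ) + 1) x = shiftPt hX 1 (shiftPt hX k x) := by
        rw [shiftPt_shiftPt, add_comm]
      rw [h1, commutes_shiftPt_one hX hφ, ih, shiftPt_shiftPt,
        show (1:ℤ)+(k:ℤ) = (k:ℤ)+1 by ring]
  | pred k ih =>
      have h1 : shiftPt hX 1 (shiftPt hX (-(k:ℤ) - 1) x) = shiftPt hX (-(k:ℤ)) x := by
        rw [shiftPt_shiftPt, show (1:ℤ) + (-(k:ℤ) - 1) = -(k:ℤ) by ring]
      have h2 := commutes_shiftPt_one hX hφ (shiftPt hX (-(k:ℤ) - 1) x)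
      rw [h1, ih] at h2
      have h3 := congrArg (shiftPt hX (-1)) h2
      rw [shiftPt_shiftPt, shiftPt_shiftPt] at h3
      have e1 : (-1 : ℤ) + -(k:ℤ) = -(k:ℤ) - 1 := by ring
      have e2 : (-1 : ℤ) + 1 = 0 := by ring
      rw [e1, e2, shiftPt_zero] at h3
      exact h3.symm

/-- block code property at a general coordinate. -/
lemma bc_at (hX : shiftMap A '' X = X) {φ : ↥X → ↥X} (hφ : CommutesWithShift X φ)
    {S : ℕ} (hbc : IsBlockCode X φ S) (x y : ↥X) (j : ℤ)
    (h : ∀ i : ℤ, j - S ≤ i → i ≤ j + S → (x : ℤ → A) i = (y : ℤ → A) i) :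
    (φ x : ℤ → A) j = (φ y : ℤ → A) j := by
  have hx : (φ x : ℤ → A) j = (φ (shiftPt hX j x) : ℤ → A) 0 := by
    rw [commutes_shiftPt hX hφ]; simp
  have hy : (φ y : ℤ → A) j = (φ (shiftPt hX j y) : ℤ → A) 0 := by
    rw [commutes_shiftPt hX hφ]; simp
  rw [hx, hy]
  apply hbc
  intro i hi1 hi2
  simp only [shiftPt_apply]
  exact h (i + j) (by omega) (by omega)

end AuxShift
section AuxSynd

variable {A : Type*} [Fintype A] [TopologicalSpace A] [DiscreteTopology A]

lemma synd {X : Set (ℤ → A)} (hX : IsMinimalSubshift X) {N : ℕ} (v : Fin N → A)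
    (hv : v ∈ Lang X N) :
    ∃ lo hi : ℤ, lo ≤ hi ∧ ∀ x ∈ X, ∀ p : ℤ,
      ∃ a : ℤ, p + lo ≤ a ∧ a ≤ p + hi ∧ ∀ i : Fin N, x ((i : ℤ) + a) = v i := by
  obtain ⟨⟨hne, hcl, himg⟩, hmin⟩ := hX
  set Z : ℤ → Set (ℤ → A) := fun m => {x | ∀ i : Fin N, x ((i : ℤ) + m) = v i} with hZ
  have hZopen : ∀ m, IsOpen (Z m) := by
    intro m
    have : Z m = ⋂ i : Fin N, {x : ℤ → A | x ((i : ℤ) + m) = v i} := by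
      ext x; simp [hZ, Set.mem_iInter]
    rw [this]
    apply isOpen_iInter_of_finite
    intro i
    have he : {x : ℤ → A | x ((i : ℤ) + m) = v i}
        = (fun x : ℤ → A => x ((i : ℤ) + m)) ⁻¹' {v i} := rfl
    rw [he]
    exact (continuous_apply _).isOpen_preimage _ (isOpen_discrete _)
  -- every point of X meets some Z m
  obtain ⟨x₀, hx₀X, hx₀v⟩ := hv
  have hx₀Z : x₀ ∈ Z 0 := by intro i; simpa using hx₀v i
  have hcover : ∀ x ∈ X, ∃ m : ℤ, x ∈ Z m := by
    by_contra hcon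
    push_neg at hcon
    obtain ⟨y, hyX, hy⟩ := hcon
    set Y : Set (ℤ → A) := X ∩ ⋂ m : ℤ, (Z m)ᶜ with hY
    have hYX : Y ⊆ X := Set.inter_subset_left
    have hYne : Y.Nonempty := ⟨y, hyX, by simp [Set.mem_iInter]; exact fun m h => hy m h⟩
    have hYcl : IsClosed Y := hcl.inter (isClosed_iInter fun m => (hZopen m).isClosed_compl)
    have hYinv : shiftMap A '' Y = Y := by
      apply Set.eq_of_subset_of_subset
      · rintro _ ⟨x, ⟨hxX, hxZ⟩, rfl⟩
        refine ⟨by rw [← himg]; exact Set.mem_image_of_mem _ hxX, ?_⟩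
        simp only [Set.mem_iInter, Set.mem_compl_iff] at hxZ ⊢
        intro m hm
        apply hxZ (m + 1)
        intro i
        have := hm i
        simp only [hZ, Set.mem_setOf_eq, shiftMap] at this ⊢
        rw [show (i : ℤ) + (m + 1) = (i : ℤ) + m + 1 by ring]
        exact this
      · rintro y ⟨hyX2, hyZ⟩
        rw [← himg] at hyX2
        obtain ⟨x, hxX, rfl⟩ := hyX2
        refine Set.mem_image_of_mem _ ⟨hxX, ?_⟩
        simp only [Set.mem_iInter, Set.mem_compl_iff] at hyZ ⊢
        intro m hm
        apply hyZ (m - 1)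
        intro i
        have := hm i
        simp only [hZ, Set.mem_setOf_eq, shiftMap] at this ⊢
        rw [show (i : ℤ) + (m - 1) + 1 = (i : ℤ) + m by ring]
        exact this
    have := hmin Y hYX hYne hYcl hYinv
    rw [this] at hYne
    have : x₀ ∈ Y := by rw [this]; exact hx₀X
    exact (Set.mem_iInter.mp this.2 0) hx₀Z
  -- compactness
  have hXcomp : IsCompact X := hcl.isCompact
  have hsub : X ⊆ ⋃ m : ℤ, Z m := by
    intro x hx; obtain ⟨m, hm⟩ := hcover x hx; exact Set.mem_iUnion.mpr ⟨m, hm⟩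
  obtain ⟨M, hM⟩ := hXcomp.elim_finite_subcover Z hZopen hsub
  have hMne : M.Nonempty := by
    obtain ⟨m, hm⟩ := Set.mem_iUnion₂.mp (hM hx₀X)
    exact ⟨m, hm.1⟩
  refine ⟨M.min' hMne, M.max' hMne, M.min'_le _ (M.max'_mem hMne), ?_⟩
  intro x hxX p
  have hxp : (fun i => x (i + p)) ∈ X := shift_mem himg p hxX
  obtain ⟨m, hmM, hmZ⟩ := Set.mem_iUnion₂.mp (hM hxp)
  refine ⟨m + p, by have := M.min'_le m hmM; omega, by have := M.le_max' m hmM; omega, ?_⟩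
  intro i
  have := hmZ i
  simp only [Set.mem_setOf_eq] at this
  rw [show (i : ℤ) + (m + p) = (i : ℤ) + m + p by ring]
  exact this

end AuxSynd
section AuxFiniteOrder

variable {A : Type*} [Fintype A] [TopologicalSpace A] [DiscreteTopology A]

lemma finite_order {X : Set (ℤ → A)} (hX : IsMinimalSubshift X)
    (ψ : Equiv.Perm ↥X) (hcomm : CommutesWithShift X ⇑ψ)
    {S : ℕ} (hbc : IsBlockCode X ⇑ψ S)
    {N : ℕ} (hSN : S ≤ N) (v : Fin N → A) (hv : v ∈ Lang X N)
    (hC : ∀ x : ↥X, (∀ i : Fin N, (x : ℤ → A) (i : ℤ) = v i) →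
      ∀ i : Fin N, (ψ x : ℤ → A) (i : ℤ) = v i) :
    ∃ k : ℕ, 1 ≤ k ∧ ψ ^ k = 1 := by
  classical
  have himg : shiftMap A '' X = X := hX.1.2.2
  set Occ : ↥X → ℤ → Prop :=
    fun x a => ∀ i : Fin N, (x : ℤ → A) ((i : ℤ) + a) = v i with hOccDef
  -- ψ preserves occurrences
  have hOccψ : ∀ (x : ↥X) (a : ℤ), Occ x a → Occ (ψ x) a := by
    intro x a h
    rw [hOccDef]
    intro i
    have h1 : ∀ i : Fin N, (shiftPt himg a x : ℤ → A) (i : ℤ) = v i := by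
      intro i; rw [shiftPt_apply]; exact h i
    have h2 := hC _ h1 i
    rw [commutes_shiftPt himg hcomm] at h2
    rw [shiftPt_apply] at h2
    exact h2
  have hψpow_comm : ∀ (m : ℕ) (a : ℤ) (x : ↥X),
      (ψ ^ m) (shiftPt himg a x) = shiftPt himg a ((ψ ^ m) x) := by
    intro m
    induction m with
    | zero => intro a x; simp
    | succ m ih =>
        intro a x
        rw [pow_succ']
        have h1 : (ψ * ψ ^ m) (shiftPt himg a x) = ψ ((ψ ^ m) (shiftPt himg a x)) :=
          Equiv.Perm.mul_apply _ _ _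
        have h2 : (ψ * ψ ^ m) x = ψ ((ψ ^ m) x) := Equiv.Perm.mul_apply _ _ _
        rw [h1, h2, ih, commutes_shiftPt himg hcomm]
  have hOccPow : ∀ (m : ℕ) (x : ↥X) (a : ℤ), Occ x a → Occ ((ψ ^ m) x) a := by
    intro m
    induction m with
    | zero => intro x a h; simpa using h
    | succ m ih =>
        intro x a h
        have h1 : (ψ ^ (m + 1)) x = ψ ((ψ ^ m) x) := by
          rw [pow_succ']; exact Equiv.Perm.mul_apply _ _ _
        rw [h1]
        exact hOccψ _ a (ih x a h)
  -- Claim A : determinism of ψ on blocks between occurrences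
  have claimA : ∀ (x x' : ↥X) (t : ℕ), Occ x 0 → Occ x (t : ℤ) → Occ x' 0 → Occ x' (t : ℤ) →
      (∀ k : ℤ, 0 ≤ k → k < (t : ℤ) → (x : ℤ → A) k = (x' : ℤ → A) k) →
      ∀ k : ℤ, 0 ≤ k → k < (t : ℤ) → (ψ x : ℤ → A) k = (ψ x' : ℤ → A) k := by
    intro x x' t hx0 hxt hx'0 hx't hagree k hk0 hkt
    by_cases hkS : k < (S : ℤ)
    · have hN : k.toNat < N := by omega
      have e1 := hOccψ x 0 hx0 ⟨k.toNat, hN⟩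
      have e2 := hOccψ x' 0 hx'0 ⟨k.toNat, hN⟩
      simp only [Fin.val_mk] at e1 e2
      have hk : ((k.toNat : ℤ) + 0) = k := by omega
      rw [hk] at e1 e2
      rw [e1, e2]
    · apply bc_at himg hcomm hbc x x' k
      intro i hi1 hi2
      by_cases hit : i < (t : ℤ)
      · exact hagree i (by omega) hit
      · have hiN : (i - (t : ℤ)).toNat < N := by omega
        have e1 := hxt ⟨(i - (t : ℤ)).toNat, hiN⟩
        have e2 := hx't ⟨(i - (t : ℤ)).toNat, hiN⟩
        simp only [Fin.val_mk] at e1 e2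
        have he : (((i - (t : ℤ)).toNat : ℤ) + (t : ℤ)) = i := by omega
        rw [he] at e1 e2
        rw [e1, e2]
  -- syndeticity
  obtain ⟨lo, hi, hlohi, hsynd⟩ := synd hX v hv
  set Kb : ℕ := 1 + 2 * (hi - lo).toNat with hKb
  obtain ⟨x₀, hx₀X, hx₀v⟩ := hv
  haveI : Nonempty A := ⟨x₀ 0⟩
  set a₀ : A := Classical.arbitrary A with ha₀
  -- the block map
  set Φ : (Fin (Kb + 1) × (Fin Kb → A)) → (Fin (Kb + 1) × (Fin Kb → A)) := fun b =>
    if h : ∃ x : ↥X, Occ x 0 ∧ Occ x ((b.1 : ℕ) : ℤ) ∧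
        ∀ i : Fin Kb, (i : ℕ) < (b.1 : ℕ) → (x : ℤ → A) (i : ℤ) = b.2 i
    then (b.1, fun i : Fin Kb => if (i : ℕ) < (b.1 : ℕ) then (ψ h.choose : ℤ → A) (i : ℤ) else a₀)
    else b with hΦ
  have hΦspec : ∀ (b : Fin (Kb + 1) × (Fin Kb → A))
      (h : ∃ x : ↥X, Occ x 0 ∧ Occ x ((b.1 : ℕ) : ℤ) ∧
        ∀ i : Fin Kb, (i : ℕ) < (b.1 : ℕ) → (x : ℤ → A) (i : ℤ) = b.2 i),
      Φ b = (b.1, fun i : Fin Kb => if (i : ℕ) < (b.1 : ℕ) then (ψ h.choose : ℤ → A) (i : ℤ) else a₀) := by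
    intro b h
    rw [hΦ]
    exact dif_pos h
  have hΦfst : ∀ b, (Φ b).1 = b.1 := by
    intro b
    rw [hΦ]
    dsimp only
    split <;> rfl
  have hΦiterfst : ∀ (m : ℕ) b, (Φ^[m] b).1 = b.1 := by
    intro m
    induction m with
    | zero => intro b; rfl
    | succ m ih => intro b; rw [Function.iterate_succ_apply', hΦfst]; exact ih b
  -- the key iteration lemma
  have KL2 : ∀ (m : ℕ) (t : Fin (Kb + 1)) (u : Fin Kb → A) (x : ↥X),
      Occ x 0 → Occ x ((t : ℕ) : ℤ) →
      (∀ i : Fin Kb, (i : ℕ) < (t : ℕ) → (x : ℤ → A) (i : ℤ) = u i) →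
      ∀ i : Fin Kb, (i : ℕ) < (t : ℕ) →
        ((ψ ^ m) x : ℤ → A) (i : ℤ) = (Φ^[m] (t, u)).2 i := by
    intro m
    induction m with
    | zero =>
        intro t u x h0 ht hu i hi
        simpa using hu i hi
    | succ m ih =>
        intro t u x h0 ht hu i hi
        have hfst : (Φ^[m] (t, u)).1 = t := hΦiterfst m (t, u)
        have hfstn : (((Φ^[m] (t, u)).1 : Fin (Kb + 1)) : ℕ) = (t : ℕ) := by rw [hfst]
        have hex : ∃ y : ↥X, Occ y 0 ∧ Occ y (((Φ^[m] (t, u)).1 : ℕ) : ℤ) ∧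
            ∀ j : Fin Kb, (j : ℕ) < ((Φ^[m] (t, u)).1 : ℕ) →
              (y : ℤ → A) (j : ℤ) = (Φ^[m] (t, u)).2 j := by
          refine ⟨(ψ ^ m) x, hOccPow m x 0 h0, ?_, ?_⟩
          · rw [hfstn]; exact hOccPow m x _ ht
          · intro j hj
            rw [hfstn] at hj
            exact ih t u x h0 ht hu j hj
        rw [Function.iterate_succ_apply', hΦspec _ hex]
        dsimp only
        rw [if_pos (show (i : ℕ) < ((Φ^[m] (t, u)).1 : ℕ) by rw [hfstn]; exact hi)]
        obtain ⟨hc0, hct, hcu⟩ := hex.choose_spec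
        have hct' : Occ hex.choose ((t : ℕ) : ℤ) := by
          have he : (((Φ^[m] (t, u)).1 : ℕ) : ℤ) = ((t : ℕ) : ℤ) := by rw [hfstn]
          rw [← he]; exact hct
        have hpow : (ψ ^ (m + 1)) x = ψ ((ψ ^ m) x) := by
          rw [pow_succ']; exact Equiv.Perm.mul_apply _ _ _
        rw [hpow]
        refine claimA ((ψ ^ m) x) hex.choose (t : ℕ) (hOccPow m x 0 h0) (hOccPow m x _ ht)
          hc0 hct' ?_ (i : ℤ) (by positivity) (by exact_mod_cast hi)
        intro k hk0 hkt
        have hkN : k.toNat < Kb := by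
          have := t.isLt; omega
        have hkt' : ((⟨k.toNat, hkN⟩ : Fin Kb) : ℕ) < (t : ℕ) := by
          simp only [Fin.val_mk]; omega
        have e1 := ih t u x h0 ht hu ⟨k.toNat, hkN⟩ hkt'
        have e2 := hcu ⟨k.toNat, hkN⟩ (by rw [hfstn]; exact hkt')
        simp only [Fin.val_mk] at e1 e2
        have hk : ((k.toNat : ℤ)) = k := by omega
        rw [hk] at e1 e2
        rw [e1, e2]
  -- pigeonhole
  have key : ∀ p q : ℕ, p < q → Φ^[p] = Φ^[q] → ∃ k : ℕ, 1 ≤ k ∧ ψ ^ k = 1 := by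
    intro p q hpq hiter
    refine ⟨q - p, by omega, ?_⟩
    have hpsi : ψ ^ p = ψ ^ q := by
      apply Equiv.ext
      intro x
      apply Subtype.ext
      funext j
      obtain ⟨a, ha1, ha2, haocc⟩ := hsynd x.1 x.2 (j - hi)
      obtain ⟨a', hb1, hb2, hbocc⟩ := hsynd x.1 x.2 (j + 1 - lo)
      set t : ℕ := (a' - a).toNat with htdef
      have ht1 : 1 ≤ t := by omega
      have ht2 : t ≤ Kb := by omega
      set y : ↥X := shiftPt himg a x with hy
      have hy0 : Occ y 0 := by
        rw [hOccDef]
        intro i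
        rw [hy, shiftPt_apply, add_zero]
        exact haocc i
      have hyt : Occ y (t : ℤ) := by
        rw [hOccDef]
        intro i
        rw [hy, shiftPt_apply, show (i : ℤ) + (t : ℤ) + a = (i : ℤ) + a' by omega]
        exact hbocc i
      have hja : (j - a).toNat < Kb := by omega
      have hjt : (((⟨(j - a).toNat, hja⟩ : Fin Kb)) : ℕ) < ((⟨t, by omega⟩ : Fin (Kb + 1)) : ℕ) := by
        simp only [Fin.val_mk]; omega
      have e1 := KL2 p ⟨t, by omega⟩ (fun i : Fin Kb => (y : ℤ → A) (i : ℤ)) y hy0 hyt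
        (fun i _ => rfl) ⟨(j - a).toNat, hja⟩ hjt
      have e2 := KL2 q ⟨t, by omega⟩ (fun i : Fin Kb => (y : ℤ → A) (i : ℤ)) y hy0 hyt
        (fun i _ => rfl) ⟨(j - a).toNat, hja⟩ hjt
      rw [hiter] at e1
      have e3 := e1.trans e2.symm
      simp only [Fin.val_mk] at e3
      rw [hy, hψpow_comm p a x, hψpow_comm q a x, shiftPt_apply, shiftPt_apply] at e3
      rw [show ((j - a).toNat : ℤ) + a = j by omega] at e3
      exact e3
    have hcl : ψ ^ p * ψ ^ (q - p) = ψ ^ p * 1 := by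
      rw [mul_one, ← pow_add, Nat.add_sub_cancel' (le_of_lt hpq)]
      exact hpsi.symm
    exact mul_left_cancel hcl
  obtain ⟨p, q, hne, heq⟩ :=
    Finite.exists_ne_map_eq_of_infinite (fun m : ℕ => Φ^[m])
  rcases hne.lt_or_gt with h | h
  · exact key p q h heq
  · exact key q p h heq.symm

end AuxFiniteOrder
theorem stmt17 {A : Type*} [Fintype A] [TopologicalSpace A] [DiscreteTopology A]
    (X : Set (ℤ → A)) (hX : IsMinimalSubshift X)
    (G : Subgroup (Equiv.Perm ↥X)) (hG : G ≤ Aut X) (hTF : Monoid.IsTorsionFree ↥G)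
    (R n : ℕ) (w : Fin n → A) (hw : w ∈ Lang X n)
    (hwr : ExtendsUniquelyRight X w (2 * R)) (hwl : ExtendsUniquelyLeft X w (2 * R))
    (wt : Fin (n + 4 * R) → A) (hwt : wt ∈ Lang X (n + 4 * R))
    (hcent : ∀ i : Fin n, wt ⟨i.val + 2 * R, by have := i.isLt; omega⟩ = w i) :
    (∀ φ₁ ∈ AutR X R ∩ (G : Set (Equiv.Perm ↥X)),
      ∀ φ₂ ∈ AutR X R ∩ (G : Set (Equiv.Perm ↥X)),
      (∀ x ∈ cylinder X wt, ∀ j : ℤ, (R : ℤ) ≤ j → j < (n : ℤ) + 3 * R →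
          (φ₁ x : ℤ → A) j = (φ₂ x : ℤ → A) j) → φ₁ = φ₂) ∧
    Nat.card ↥(AutR X R ∩ (G : Set (Equiv.Perm ↥X))) ≤ complexity X (n + 2 * R) := by
  classical
  have himg : shiftMap A '' X = X := hX.1.2.2
  obtain ⟨xt0, hxt0X, hxt0v⟩ := hwt
  set x₀ : ↥X := ⟨xt0, hxt0X⟩ with hx₀def
  have hx₀cyl : ∀ i : Fin (n + 4 * R), (x₀ : ℤ → A) ((i : ℕ) : ℤ) = wt i := fun i => hxt0v i
  have hwtLang : wt ∈ Lang X (n + 4 * R) := ⟨xt0, hxt0X, hxt0v⟩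
  -- PART 1
  have part1 : ∀ φ₁ ∈ AutR X R ∩ (G : Set (Equiv.Perm ↥X)),
      ∀ φ₂ ∈ AutR X R ∩ (G : Set (Equiv.Perm ↥X)),
      (∀ x ∈ cylinder X wt, ∀ j : ℤ, (R : ℤ) ≤ j → j < (n : ℤ) + 3 * R →
          (φ₁ x : ℤ → A) j = (φ₂ x : ℤ → A) j) → φ₁ = φ₂ := by
    intro φ₁ hφ₁ φ₂ hφ₂ hagree
    obtain ⟨⟨hφ₁Aut, hbc₁, hbc₁'⟩, hφ₁G⟩ := hφ₁
    obtain ⟨⟨hφ₂Aut, hbc₂, hbc₂'⟩, hφ₂G⟩ := hφ₂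
    have hprops₁ : Continuous ⇑φ₁ ∧ Continuous ⇑φ₁.symm ∧
        CommutesWithShift X ⇑φ₁ ∧ CommutesWithShift X ⇑φ₁.symm := hφ₁Aut
    have hprops₂ : Continuous ⇑φ₂ ∧ Continuous ⇑φ₂.symm ∧
        CommutesWithShift X ⇑φ₂ ∧ CommutesWithShift X ⇑φ₂.symm := hφ₂Aut
    have hcm₁ := hprops₁.2.2.1
    have hcm₂' := hprops₂.2.2.2
    set ψ : Equiv.Perm ↥X := φ₂⁻¹ * φ₁ with hψdef
    have hψAut : ψ ∈ Aut X := mul_mem (inv_mem hφ₂Aut) hφ₁Aut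
    have hψprops : Continuous ⇑ψ ∧ Continuous ⇑ψ.symm ∧
        CommutesWithShift X ⇑ψ ∧ CommutesWithShift X ⇑ψ.symm := hψAut
    have hψcomm := hψprops.2.2.1
    have hψapp : ∀ x : ↥X, ψ x = φ₂.symm (φ₁ x) := fun x => rfl
    -- ψ is a block code of range 2R
    have hψbc : IsBlockCode X ⇑ψ (2 * R) := by
      intro x y hxy
      rw [hψapp x, hψapp y]
      apply hbc₂'
      intro i hi1 hi2
      apply bc_at himg hcm₁ hbc₁ x y i
      intro i' h1 h2
      apply hxy i' (by push_cast at hi1 hi2 ⊢; omega) (by push_cast at hi1 hi2 ⊢; omega)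
    -- on the cylinder, ψ agrees with the identity in the central window
    have hmid : ∀ x : ↥X, x ∈ cylinder X wt → ∀ j : ℤ, 2 * (R : ℤ) ≤ j → j < (n : ℤ) + 2 * R →
        (ψ x : ℤ → A) j = (x : ℤ → A) j := by
      intro x hx j hj1 hj2
      rw [hψapp x]
      have h1 : (φ₂.symm (φ₁ x) : ℤ → A) j = (φ₂.symm (φ₂ x) : ℤ → A) j := by
        apply bc_at himg hcm₂' hbc₂' (φ₁ x) (φ₂ x) j
        intro i hi1 hi2
        exact hagree x hx i (by omega) (by omega)
      rw [h1, Equiv.symm_apply_apply]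
    -- ψ maps the cylinder of wt into itself
    have hCyl : ∀ x : ↥X, (∀ i : Fin (n + 4 * R), (x : ℤ → A) ((i : ℕ) : ℤ) = wt i) →
        ∀ i : Fin (n + 4 * R), (ψ x : ℤ → A) ((i : ℕ) : ℤ) = wt i := by
      intro x hx
      have hxcyl : x ∈ cylinder X wt := hx
      -- right extension
      obtain ⟨ur, hur, huniqr⟩ := hwr
      have hu1 : (fun i : Fin (n + 2 * R) => (ψ x : ℤ → A) ((i : ℕ) + 2 * (R : ℤ))) ∈
            Lang X (n + 2 * R) ∧
          ∀ i : Fin n, (fun i : Fin (n + 2 * R) => (ψ x : ℤ → A) ((i : ℕ) + 2 * (R : ℤ)))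
            (Fin.castAdd (2 * R) i) = w i := by
        constructor
        · exact ⟨(shiftPt himg (2 * R) (ψ x) : ℤ → A), (shiftPt himg (2 * R) (ψ x)).2,
            fun i => rfl⟩
        · intro i
          show (ψ x : ℤ → A) (((Fin.castAdd (2 * R) i : ℕ) : ℤ) + 2 * (R : ℤ)) = w i
          rw [Fin.coe_castAdd]
          have e := hmid x hxcyl (((i : ℕ) : ℤ) + 2 * R) (by omega)
            (by have := i.isLt; omega)
          rw [e]
          have hlt : (i : ℕ) + 2 * R < n + 4 * R := by have := i.isLt; omega
          have e2 : (x : ℤ → A) ((((i : ℕ) + 2 * R : ℕ)) : ℤ) = wt ⟨(i : ℕ) + 2 * R, hlt⟩ :=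
            hx ⟨(i : ℕ) + 2 * R, hlt⟩
          rw [show ((i : ℕ) : ℤ) + 2 * (R : ℤ) = (((i : ℕ) + 2 * R : ℕ) : ℤ) by push_cast; ring,
            e2]
          exact hcent i
      have hu2 : (fun i : Fin (n + 2 * R) => wt ⟨(i : ℕ) + 2 * R, by have := i.isLt; omega⟩) ∈
            Lang X (n + 2 * R) ∧
          ∀ i : Fin n, (fun i : Fin (n + 2 * R) =>
              wt ⟨(i : ℕ) + 2 * R, by have := i.isLt; omega⟩)
            (Fin.castAdd (2 * R) i) = w i := by
        constructor
        · refine ⟨(shiftPt himg (2 * R) x₀ : ℤ → A), (shiftPt himg (2 * R) x₀).2, fun i => ?_⟩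
          show (x₀ : ℤ → A) (((i : ℕ) : ℤ) + 2 * (R : ℤ)) = _
          have hlt : (i : ℕ) + 2 * R < n + 4 * R := by have := i.isLt; omega
          have e2 : (x₀ : ℤ → A) ((((i : ℕ) + 2 * R : ℕ)) : ℤ) = wt ⟨(i : ℕ) + 2 * R, hlt⟩ :=
            hx₀cyl ⟨(i : ℕ) + 2 * R, hlt⟩
          rw [show ((i : ℕ) : ℤ) + 2 * (R : ℤ) = (((i : ℕ) + 2 * R : ℕ) : ℤ) by push_cast; ring,
            e2]
        · intro i
          show wt ⟨((Fin.castAdd (2 * R) i : Fin (n + 2 * R)) : ℕ) + 2 * R, _⟩ = w i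
          have : ((Fin.castAdd (2 * R) i : Fin (n + 2 * R)) : ℕ) = (i : ℕ) := Fin.coe_castAdd _ _
          rw [show (⟨((Fin.castAdd (2 * R) i : Fin (n + 2 * R)) : ℕ) + 2 * R, _⟩ :
              Fin (n + 4 * R)) = ⟨(i : ℕ) + 2 * R, by have := i.isLt; omega⟩ from
            Fin.ext (by show ((Fin.castAdd (2 * R) i : Fin (n + 2 * R)) : ℕ) + 2 * R
              = (i : ℕ) + 2 * R; rw [this])]
          exact hcent i
      have he12 := (huniqr _ hu1).trans (huniqr _ hu2).symm
      -- left extension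
      obtain ⟨ul, hul, huniql⟩ := hwl
      have hv1 : (fun i : Fin (n + 2 * R) => (ψ x : ℤ → A) ((i : ℕ) : ℤ)) ∈
            Lang X (n + 2 * R) ∧
          ∀ i : Fin n, (fun i : Fin (n + 2 * R) => (ψ x : ℤ → A) ((i : ℕ) : ℤ))
            (Fin.cast (Nat.add_comm (2 * R) n) (Fin.natAdd (2 * R) i)) = w i := by
        constructor
        · exact ⟨(ψ x : ℤ → A), (ψ x).2, fun i => rfl⟩
        · intro i
          show (ψ x : ℤ → A) ((((Fin.cast (Nat.add_comm (2 * R) n) (Fin.natAdd (2 * R) i) :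
            Fin (n + 2 * R)) : ℕ)) : ℤ) = w i
          have hco : ((Fin.cast (Nat.add_comm (2 * R) n) (Fin.natAdd (2 * R) i) :
              Fin (n + 2 * R)) : ℕ) = 2 * R + (i : ℕ) := rfl
          rw [hco]
          have e := hmid x hxcyl ((2 * R + (i : ℕ) : ℕ) : ℤ)
            (by push_cast; omega) (by have := i.isLt; push_cast; omega)
          rw [e]
          have hlt : 2 * R + (i : ℕ) < n + 4 * R := by have := i.isLt; omega
          have e2 : (x : ℤ → A) (((2 * R + (i : ℕ) : ℕ)) : ℤ) = wt ⟨2 * R + (i : ℕ), hlt⟩ :=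
            hx ⟨2 * R + (i : ℕ), hlt⟩
          rw [e2]
          rw [show (⟨2 * R + (i : ℕ), hlt⟩ : Fin (n + 4 * R)) =
            ⟨(i : ℕ) + 2 * R, by have := i.isLt; omega⟩ from
            Fin.ext (by show 2 * R + (i : ℕ) = (i : ℕ) + 2 * R; omega)]
          exact hcent i
      have hv2 : (fun i : Fin (n + 2 * R) => wt ⟨(i : ℕ), by have := i.isLt; omega⟩) ∈
            Lang X (n + 2 * R) ∧
          ∀ i : Fin n, (fun i : Fin (n + 2 * R) => wt ⟨(i : ℕ), by have := i.isLt; omega⟩)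
            (Fin.cast (Nat.add_comm (2 * R) n) (Fin.natAdd (2 * R) i)) = w i := by
        constructor
        · refine ⟨(x₀ : ℤ → A), x₀.2, fun i => ?_⟩
          exact hx₀cyl ⟨(i : ℕ), by have := i.isLt; omega⟩
        · intro i
          show wt ⟨((Fin.cast (Nat.add_comm (2 * R) n) (Fin.natAdd (2 * R) i) :
            Fin (n + 2 * R)) : ℕ), _⟩ = w i
          rw [show (⟨((Fin.cast (Nat.add_comm (2 * R) n) (Fin.natAdd (2 * R) i) :
              Fin (n + 2 * R)) : ℕ), _⟩ : Fin (n + 4 * R)) =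
            ⟨(i : ℕ) + 2 * R, by have := i.isLt; omega⟩ from Fin.ext (by
              show 2 * R + (i : ℕ) = (i : ℕ) + 2 * R; omega)]
          exact hcent i
      have he12' := (huniql _ hv1).trans (huniql _ hv2).symm
      -- combine
      intro i
      by_cases hcase : (i : ℕ) < n + 2 * R
      · have h3 := congrFun he12' ⟨(i : ℕ), hcase⟩
        simp only at h3
        simpa using h3
      · obtain ⟨k, hk⟩ : ∃ k : ℕ, (i : ℕ) = k + 2 * R := ⟨(i : ℕ) - 2 * R, by omega⟩
        have hkk : k < n + 2 * R := by have := i.isLt; omega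
        have h3 := congrFun he12 ⟨k, hkk⟩
        simp only at h3
        rw [show ((i : ℕ) : ℤ) = ((k : ℕ) : ℤ) + 2 * (R : ℤ) by omega, h3]
        exact congrArg wt (Fin.ext (by show k + 2 * R = (i : ℕ); omega))
    -- finite order, hence trivial
    obtain ⟨k, hk1, hk2⟩ := finite_order hX ψ hψcomm hψbc
      (show 2 * R ≤ n + 4 * R by omega) wt hwtLang hCyl
    have hψG : ψ ∈ G := mul_mem (inv_mem hφ₂G) hφ₁G
    have hgk : (⟨ψ, hψG⟩ : ↥G) ^ k = 1 := by
      apply Subtype.ext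
      rw [SubmonoidClass.coe_pow]
      exact hk2
    have hg1 : (⟨ψ, hψG⟩ : ↥G) = 1 := by
      by_contra hne
      exact hTF _ hne (isOfFinOrder_iff_pow_eq_one.mpr ⟨k, hk1, hgk⟩)
    have hψ1 : ψ = 1 := by
      have := congrArg Subtype.val hg1
      simpa using this
    have : φ₂⁻¹ * φ₁ = 1 := by rw [← hψdef]; exact hψ1
    exact (inv_mul_eq_one.mp this).symm
  refine ⟨part1, ?_⟩
  -- PART 2
  have hmemf : ∀ φ : Equiv.Perm ↥X,
      (fun i : Fin (n + 2 * R) => (φ x₀ : ℤ → A) (((i : ℕ) : ℤ) + R)) ∈ Lang X (n + 2 * R) :=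
    fun φ => ⟨(shiftPt himg R (φ x₀) : ℤ → A), (shiftPt himg R (φ x₀)).2, fun i => rfl⟩
  set f : ↥(AutR X R ∩ (G : Set (Equiv.Perm ↥X))) → ↥(Lang X (n + 2 * R)) :=
    fun φ => ⟨_, hmemf φ.1⟩ with hfdef
  have hinj : Function.Injective f := by
    intro φ φ' hff
    apply Subtype.ext
    apply part1 φ.1 φ.2 φ'.1 φ'.2
    intro x hx j hj1 hj2
    have hx' : ∀ i : Fin (n + 4 * R), (x : ℤ → A) ((i : ℕ) : ℤ) = wt i := hx
    obtain ⟨⟨hφAut, hbcφ, _⟩, _⟩ := φ.2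
    obtain ⟨⟨hφ'Aut, hbcφ', _⟩, _⟩ := φ'.2
    have hpropsφ : Continuous ⇑φ.1 ∧ Continuous ⇑(φ.1).symm ∧
        CommutesWithShift X ⇑φ.1 ∧ CommutesWithShift X ⇑(φ.1).symm := hφAut
    have hpropsφ' : Continuous ⇑φ'.1 ∧ Continuous ⇑(φ'.1).symm ∧
        CommutesWithShift X ⇑φ'.1 ∧ CommutesWithShift X ⇑(φ'.1).symm := hφ'Aut
    have hagree0 : ∀ k : ℤ, j - R ≤ k → k ≤ j + R → (x : ℤ → A) k = (x₀ : ℤ → A) k := by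
      intro k h1 h2
      have hkN : k.toNat < n + 4 * R := by omega
      have e1 : (x : ℤ → A) ((k.toNat : ℤ)) = wt ⟨k.toNat, hkN⟩ := hx' ⟨k.toNat, hkN⟩
      have e2 : (x₀ : ℤ → A) ((k.toNat : ℤ)) = wt ⟨k.toNat, hkN⟩ := hx₀cyl ⟨k.toNat, hkN⟩
      rw [show ((k.toNat : ℤ)) = k by omega] at e1 e2
      rw [e1, e2]
    have h1 := bc_at himg hpropsφ.2.2.1 hbcφ x x₀ j hagree0
    have h1' := bc_at himg hpropsφ'.2.2.1 hbcφ' x x₀ j hagree0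
    rw [h1, h1']
    have h3 := congrFun (congrArg Subtype.val hff) ⟨(j - R).toNat, by omega⟩
    simp only [hfdef] at h3
    rw [show ((((j - (R : ℤ)).toNat : ℕ) : ℤ) + R) = j by omega] at h3
    exact h3
  have hcard := Nat.card_le_card_of_injective f hinj
  show Nat.card _ ≤ (Lang X (n + 2 * R)).ncard
  rw [← Nat.card_coe_set_eq]
  exact hcard
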